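/- Let G be a connected bipartite graph with colour classes V and E and a fixed total order on E. If there exists a hypertree of G with exactly k internally inactive hyperedges, where k ≥ 1, then there exists a hypertree of G with exactly k − 1 internally inactive hyperedges. -/

import Mathlib

open SimpleGraph

variable {V E : Type*}

/-- The bipartite graph on `V ⊕ E` determined by the incidence relation `r`. -/
def BipGraph (r : V → E → Prop) : SimpleGraph (V ⊕ E) where
  Adj x y := (∃ v e, x = Sum.inl v ∧ y = Sum.inr e ∧ r v e) ∨
             (∃ v e, x = Sum.inr e ∧ y = Sum.inl v ∧ r v e)
  symm := by
    refine ⟨?_⟩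
    rintro x y (⟨v, e, rfl, rfl, h⟩ | ⟨v, e, rfl, rfl, h⟩)
    · exact Or.inr ⟨v, e, rfl, rfl, h⟩
    · exact Or.inl ⟨v, e, rfl, rfl, h⟩
  loopless := by
    refine ⟨?_⟩
    rintro x (⟨v, e, rfl, h, _⟩ | ⟨v, e, rfl, h, _⟩) <;> simp_all

/-- `τ` is a spanning tree of `G`. -/
def IsSpanningTree {α : Type*} (G τ : SimpleGraph α) : Prop :=
  τ ≤ G ∧ τ.Connected ∧ τ.IsAcyclic

/-- A hypertree of the hypergraph induced by the bipartite graph `BipGraph r`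
(with `E` the set of hyperedges): a function realized by a spanning tree. -/
def IsHypertree (r : V → E → Prop) (f : E → ℕ) : Prop :=
  ∃ τ : SimpleGraph (V ⊕ E), IsSpanningTree (BipGraph r) τ ∧
    ∀ e : E, (τ.neighborSet (Sum.inr e)).ncard = f e + 1

/-- The restriction of a graph `H` on `V ⊕ E` (typically a subgraph of `BipGraph r`)
to the hyperedge set `A` together with all `V`-vertices incident (in `G`) to `A`. -/
def BipRestrict (r : V → E → Prop) (H : SimpleGraph (V ⊕ E)) (A : Set E) :
    SimpleGraph ({v : V // ∃ e ∈ A, r v e} ⊕ A) where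
  Adj x y := H.Adj (Sum.elim (fun v => Sum.inl v.1) (fun e => Sum.inr e.1) x)
               (Sum.elim (fun v => Sum.inl v.1) (fun e => Sum.inr e.1) y)
  symm := ⟨fun _ _ h => H.adj_symm h⟩
  loopless := by
    refine ⟨?_⟩
    rintro (v | e) h <;> exact H.irrefl h

/-- `μ(A) = |⋃A| - c(A)`. -/
noncomputable def mu (r : V → E → Prop) (A : Set E) : ℕ :=
  Nat.card {v : V // ∃ e ∈ A, r v e} -
    Nat.card (BipRestrict r (BipGraph r) A).ConnectedComponent

/-- `A` is tight at `f`. -/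
noncomputable def Tight (r : V → E → Prop) (f : E → ℕ) (A : Finset E) : Prop :=
  ∑ e ∈ A, f e = mu r (↑A : Set E)

open Classical in
/-- The function obtained from `f` by decreasing `f e` by one and increasing `f e'` by one. -/
noncomputable def Transfer (f : E → ℕ) (e e' : E) : E → ℕ :=
  fun x => if x = e then f e - 1 else if x = e' then f e' + 1 else f x

/-- The internal inactivity of `f`: the number of internally inactive hyperedges. -/
noncomputable def intInact (r : V → E → Prop) [LT E] (f : E → ℕ) : ℕ :=
  Nat.card {e : E // ∃ e', e' < e ∧ IsHypertree r (Transfer f e e')}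

/-- The external inactivity of `f`: the number of externally inactive hyperedges. -/
noncomputable def extInact (r : V → E → Prop) [LT E] (f : E → ℕ) : ℕ :=
  Nat.card {e : E // ∃ e', e' < e ∧ IsHypertree r (Transfer f e' e)}

/-- The interior polynomial `I_G(x) = ∑_f x^{ῑ(f)}`. -/
noncomputable def interiorPoly (r : V → E → Prop) [Fintype E] [LT E] : Polynomial ℤ :=
  ∑ i ∈ Finset.range (Fintype.card E + 1),
    Polynomial.C ((Nat.card {f : E → ℕ // IsHypertree r f ∧ intInact r f = i} : ℕ) : ℤ) *
      Polynomial.X ^ i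

/-- The exterior polynomial `X_G(y) = ∑_f y^{ε̄(f)}`. -/
noncomputable def exteriorPoly (r : V → E → Prop) [Fintype E] [LT E] : Polynomial ℤ :=
  ∑ i ∈ Finset.range (Fintype.card E + 1),
    Polynomial.C ((Nat.card {f : E → ℕ // IsHypertree r f ∧ extInact r f = i} : ℕ) : ℤ) *
      Polynomial.X ^ i

/-! ### Auxiliary development -/

namespace IntInactAux

open SimpleGraph Sum

variable {V E : Type*} {r : V → E → Prop}

/-- `τ` realizes the degree function `F` on the `E`-side. -/
def Realizes (τ : SimpleGraph (V ⊕ E)) (F : E → ℕ) : Prop :=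
  ∀ c : E, (τ.neighborSet (Sum.inr c)).ncard = F c + 1

lemma isHypertree_iff {F : E → ℕ} :
    IsHypertree r F ↔ ∃ τ, IsSpanningTree (BipGraph r) τ ∧ Realizes τ F := Iff.rfl

lemma bip_shape {τ : SimpleGraph (V ⊕ E)} (hle : τ ≤ BipGraph r) {x y : V ⊕ E}
    (h : τ.Adj x y) :
    (∃ v e, x = inl v ∧ y = inr e) ∨ (∃ v e, x = inr e ∧ y = inl v) := by
  rcases hle h with ⟨v, e, hx, hy, _⟩ | ⟨v, e, hx, hy, _⟩
  · exact Or.inl ⟨v, e, hx, hy⟩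
  · exact Or.inr ⟨v, e, hx, hy⟩

lemma not_adj_inr_inr {τ : SimpleGraph (V ⊕ E)} (hle : τ ≤ BipGraph r) {c c' : E} :
    ¬ τ.Adj (inr c) (inr c') := by
  intro h
  rcases bip_shape hle h with ⟨v, e, hx, _⟩ | ⟨v, e, _, hy⟩ <;> simp_all

lemma nbr_inr_inl {τ : SimpleGraph (V ⊕ E)} (hle : τ ≤ BipGraph r) {c : E} {y : V ⊕ E}
    (h : τ.Adj (inr c) y) : ∃ v : V, y = inl v := by
  rcases bip_shape hle h with ⟨v, e, hx, _⟩ | ⟨v, e, _, hy⟩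
  · simp_all
  · exact ⟨v, hy⟩

/-- A walk from inside `C` to outside `C` crosses the boundary. -/
lemma walk_cross {α : Type*} {σ : SimpleGraph α} (C : Set α) {x y : α} (W : σ.Walk x y)
    (hx : x ∈ C) (hy : y ∉ C) : ∃ p q, σ.Adj p q ∧ p ∈ C ∧ q ∉ C := by
  induction W with
  | nil => exact absurd hx hy
  | @cons a b c h W ih =>
    by_cases hb : b ∈ C
    · exact ih hb hy
    · exact ⟨a, b, h, hx, hb⟩

/-- In a connected graph, after deleting one edge every vertex is reachable from one of the
two endpoints. -/
lemma two_comp {α : Type*} {τ : SimpleGraph α} (hc : τ.Connected) {w u : α}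
    (hadj : τ.Adj w u) (x : α) :
    (τ.deleteEdges {s(w,u)}).Reachable u x ∨ (τ.deleteEdges {s(w,u)}).Reachable w x := by
  have step : ∀ {y z : α}, τ.Adj y z →
      ((τ.deleteEdges {s(w,u)}).Reachable u y ∨ (τ.deleteEdges {s(w,u)}).Reachable w y) →
      ((τ.deleteEdges {s(w,u)}).Reachable u z ∨ (τ.deleteEdges {s(w,u)}).Reachable w z) := by
    intro y z hyz hy
    by_cases hs : s(y,z) = s(w,u)
    · rw [Sym2.eq_iff] at hs
      rcases hs with ⟨rfl, rfl⟩ | ⟨rfl, rfl⟩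
      · exact Or.inl (Reachable.refl _)
      · exact Or.inr (Reachable.refl _)
    · have hadj' : (τ.deleteEdges {s(w,u)}).Adj y z := by
        rw [deleteEdges_adj]
        exact ⟨hyz, by simpa using hs⟩
      rcases hy with hy | hy
      · exact Or.inl (hy.trans hadj'.reachable)
      · exact Or.inr (hy.trans hadj'.reachable)
  have main : ∀ {y z : α}, τ.Walk y z →
      ((τ.deleteEdges {s(w,u)}).Reachable u y ∨ (τ.deleteEdges {s(w,u)}).Reachable w y) →
      ((τ.deleteEdges {s(w,u)}).Reachable u z ∨ (τ.deleteEdges {s(w,u)}).Reachable w z) := by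
    intro y z W
    induction W with
    | nil => exact id
    | @cons a b c h W ih => exact fun hy => ih (step h hy)
  exact main (hc.preconnected u x).some (Or.inl (Reachable.refl _))

section Surgery

variable {α : Type*} {G τ : SimpleGraph α} {w u p q : α}

/-- The swapped graph. -/
def swap (τ : SimpleGraph α) (w u p q : α) : SimpleGraph α :=
  (τ.deleteEdges {s(w,u)}) ⊔ SimpleGraph.fromEdgeSet {s(p,q)}

lemma swap_adj {x y : α} :
    (swap τ w u p q).Adj x y ↔ (τ.Adj x y ∧ s(x,y) ≠ s(w,u)) ∨ (s(x,y) = s(p,q) ∧ x ≠ y) := by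
  simp [swap, SimpleGraph.sup_adj, SimpleGraph.deleteEdges_adj, SimpleGraph.fromEdgeSet_adj]

lemma swap_adj' {x y : α} :
    (swap τ w u p q).Adj x y ↔
      (τ.Adj x y ∧ ¬(x = w ∧ y = u) ∧ ¬(x = u ∧ y = w)) ∨
      (((x = p ∧ y = q) ∨ (x = q ∧ y = p)) ∧ x ≠ y) := by
  rw [swap_adj]
  constructor
  · rintro (⟨h, hne⟩ | ⟨hs, hxy⟩)
    · refine Or.inl ⟨h, ?_, ?_⟩
      · rintro ⟨rfl, rfl⟩; exact hne rfl
      · rintro ⟨rfl, rfl⟩; exact hne (Sym2.eq_swap)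
    · rw [Sym2.eq_iff] at hs
      exact Or.inr ⟨hs, hxy⟩
  · rintro (⟨h, h1, h2⟩ | ⟨hs, hxy⟩)
    · refine Or.inl ⟨h, fun hs => ?_⟩
      rw [Sym2.eq_iff] at hs
      rcases hs with hs | hs
      · exact h1 hs
      · exact h2 hs
    · exact Or.inr ⟨by rw [Sym2.eq_iff]; exact hs, hxy⟩

lemma swap_le (hle : τ ≤ G) (hpq : G.Adj p q) : swap τ w u p q ≤ G := by
  intro x y h
  rw [swap_adj'] at h
  rcases h with ⟨h, _⟩ | ⟨⟨rfl, rfl⟩ | ⟨rfl, rfl⟩, hne⟩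
  · exact hle h
  · exact hpq
  · exact hpq.symm

variable (hc : τ.Connected) (hac : τ.IsAcyclic) (hadj : τ.Adj w u)
    (hpqτ : ¬ τ.Adj p q)
    (hp : (τ.deleteEdges {s(w,u)}).Reachable u p)
    (hq : ¬ (τ.deleteEdges {s(w,u)}).Reachable u q)

include hp hq in
lemma swap_pq_ne : p ≠ q := by
  rintro rfl; exact hq hp

include hc hadj hp hq in
lemma swap_reach_uw : (swap τ w u p q).Reachable u w := by
  have hle : τ.deleteEdges {s(w,u)} ≤ swap τ w u p q := le_sup_left
  have h1 : (swap τ w u p q).Reachable u p := hp.mono hle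
  have h2 : (swap τ w u p q).Adj p q := by
    rw [swap_adj]; exact Or.inr ⟨rfl, swap_pq_ne hp hq⟩
  have h3 : (τ.deleteEdges {s(w,u)}).Reachable w q := by
    rcases two_comp hc hadj q with h | h
    · exact absurd h hq
    · exact h
  exact (h1.trans h2.reachable).trans (h3.mono hle).symm

include hc hadj hp hq in
lemma swap_connected : (swap τ w u p q).Connected := by
  have hle : τ.deleteEdges {s(w,u)} ≤ swap τ w u p q := le_sup_left
  have huw := swap_reach_uw hc hadj hp hq
  have step : ∀ {x y : α}, τ.Adj x y → (swap τ w u p q).Reachable x y := by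
    intro x y hxy
    by_cases hs : s(x,y) = s(w,u)
    · rw [Sym2.eq_iff] at hs
      rcases hs with ⟨rfl, rfl⟩ | ⟨rfl, rfl⟩
      · exact huw.symm
      · exact huw
    · refine SimpleGraph.Adj.reachable ?_
      rw [swap_adj]; exact Or.inl ⟨hxy, hs⟩
  have main : ∀ {x y : α}, τ.Walk x y → (swap τ w u p q).Reachable x y := by
    intro x y W
    induction W with
    | nil => exact SimpleGraph.Reachable.refl _
    | @cons a b c h W ih => exact (step h).trans ih
  haveI := hc.nonempty
  exact SimpleGraph.Connected.mk fun x y => main (hc.preconnected x y).some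

include hac hpqτ hp hq in
lemma swap_isAcyclic : (swap τ w u p q).IsAcyclic := by
  classical
  have hpqne : p ≠ q := swap_pq_ne hp hq
  have hedge : (swap τ w u p q).Adj p q := by
    rw [swap_adj]; exact Or.inr ⟨rfl, hpqne⟩
  have hbridge : (swap τ w u p q).IsBridge s(p,q) := by
    rw [SimpleGraph.isBridge_iff]
    refine fun hreach => ?_
    have hle : (swap τ w u p q \ SimpleGraph.fromEdgeSet {s(p,q)}) ≤ τ.deleteEdges {s(w,u)} := by
      intro x y h
      simp only [SimpleGraph.sdiff_adj, swap_adj, SimpleGraph.fromEdgeSet_adj,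
        Set.mem_singleton_iff, not_and, ne_eq] at h
      obtain ⟨h1, h2⟩ := h
      rcases h1 with ⟨h1, hne⟩ | ⟨hs, hne⟩
      · rw [SimpleGraph.deleteEdges_adj]; exact ⟨h1, by simpa using hne⟩
      · exact absurd hs (by simpa [hne] using h2)
    exact hq (hp.trans (hreach.mono hle))
  intro v c hcyc
  have hno : s(p,q) ∉ c.edges :=
    (SimpleGraph.isBridge_iff_mem_and_forall_cycle_notMem hedge).mp hbridge c hcyc
  have hsub : ∀ e ∈ c.edges, e ∈ τ.edgeSet := by
    intro e he
    have h2 := c.edges_subset_edgeSet he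
    simp only [swap, SimpleGraph.edgeSet_sup, SimpleGraph.edgeSet_deleteEdges,
      SimpleGraph.edgeSet_fromEdgeSet, Set.mem_union, Set.mem_diff,
      Set.mem_singleton_iff] at h2
    rcases h2 with ⟨h1, _⟩ | ⟨h1, _⟩
    · exact h1
    · exact absurd (h1 ▸ he) hno
  exact hac (c.transfer τ hsub) (hcyc.transfer hsub)

include hc hac hadj hpqτ hp hq in
lemma swap_isSpanningTree (hτG : τ ≤ G) (hpqG : G.Adj p q) :
    IsSpanningTree G (swap τ w u p q) :=
  ⟨swap_le hτG hpqG, swap_connected hc hadj hp hq, swap_isAcyclic hac hpqτ hp hq⟩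

/-! neighbor set computations -/

lemma swap_nbr_of_ne {x : α} (hxw : x ≠ w) (hxu : x ≠ u) (hxp : x ≠ p) (hxq : x ≠ q) :
    (swap τ w u p q).neighborSet x = τ.neighborSet x := by
  ext y
  rw [SimpleGraph.mem_neighborSet, swap_adj', SimpleGraph.mem_neighborSet]
  constructor
  · rintro (⟨h, _⟩ | ⟨⟨rfl, rfl⟩ | ⟨rfl, rfl⟩, _⟩)
    · exact h
    · exact absurd rfl hxp
    · exact absurd rfl hxq
  · intro h
    refine Or.inl ⟨h, ?_, ?_⟩
    · rintro ⟨rfl, rfl⟩; exact hxw rfl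
    · rintro ⟨rfl, rfl⟩; exact hxu rfl

lemma swap_nbr_w (hwp : w ≠ p) (hwq : w ≠ q) (hwu : w ≠ u) :
    (swap τ w u p q).neighborSet w = τ.neighborSet w \ {u} := by
  ext y
  rw [SimpleGraph.mem_neighborSet, swap_adj', Set.mem_diff, SimpleGraph.mem_neighborSet,
    Set.mem_singleton_iff]
  constructor
  · rintro (⟨h, h1, -⟩ | ⟨⟨rfl, rfl⟩ | ⟨rfl, rfl⟩, -⟩)
    · exact ⟨h, fun hyu => h1 ⟨rfl, hyu⟩⟩
    · exact absurd rfl hwp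
    · exact absurd rfl hwq
  · rintro ⟨h, hyu⟩
    refine Or.inl ⟨h, ?_, ?_⟩
    · rintro ⟨-, h2⟩; exact hyu h2
    · rintro ⟨h2, -⟩; exact hwu h2

lemma swap_nbr_q (hqw : q ≠ w) (hqu : q ≠ u) (hqp : q ≠ p) :
    (swap τ w u p q).neighborSet q = insert p (τ.neighborSet q) := by
  ext y
  rw [SimpleGraph.mem_neighborSet, swap_adj', Set.mem_insert_iff, SimpleGraph.mem_neighborSet]
  constructor
  · rintro (⟨h, -, -⟩ | ⟨⟨rfl, rfl⟩ | ⟨-, rfl⟩, -⟩)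
    · exact Or.inr h
    · exact absurd rfl hqp
    · exact Or.inl rfl
  · rintro (rfl | h)
    · exact Or.inr ⟨Or.inr ⟨rfl, rfl⟩, hqp⟩
    · refine Or.inl ⟨h, ?_, ?_⟩
      · rintro ⟨h2, -⟩; exact hqw h2
      · rintro ⟨h2, -⟩; exact hqu h2

lemma swap_nbr_p (hpw : p ≠ w) (hpu : p ≠ u) (hpq : p ≠ q) :
    (swap τ w u p q).neighborSet p = insert q (τ.neighborSet p) := by
  ext y
  rw [SimpleGraph.mem_neighborSet, swap_adj', Set.mem_insert_iff, SimpleGraph.mem_neighborSet]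
  constructor
  · rintro (⟨h, -, -⟩ | ⟨⟨-, rfl⟩ | ⟨rfl, rfl⟩, -⟩)
    · exact Or.inr h
    · exact Or.inl rfl
    · exact absurd rfl (Ne.symm hpq)
  · rintro (rfl | h)
    · exact Or.inr ⟨Or.inl ⟨rfl, rfl⟩, hpq⟩
    · refine Or.inl ⟨h, ?_, ?_⟩
      · rintro ⟨h2, -⟩; exact hpw h2
      · rintro ⟨h2, -⟩; exact hpu h2

lemma swap_nbr_w_eq_q (hwp : w ≠ p) :
    (swap τ w u p w).neighborSet w = insert p (τ.neighborSet w \ {u}) := by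
  ext y
  rw [SimpleGraph.mem_neighborSet, swap_adj', Set.mem_insert_iff, Set.mem_diff,
    SimpleGraph.mem_neighborSet, Set.mem_singleton_iff]
  constructor
  · rintro (⟨h, h1, -⟩ | ⟨⟨h2, rfl⟩ | ⟨-, rfl⟩, -⟩)
    · exact Or.inr ⟨h, fun hyu => h1 ⟨rfl, hyu⟩⟩
    · exact absurd h2 hwp
    · exact Or.inl rfl
  · rintro (rfl | ⟨h, hyu⟩)
    · exact Or.inr ⟨Or.inr ⟨rfl, rfl⟩, fun h2 => hwp h2⟩
    · refine Or.inl ⟨h, ?_, ?_⟩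
      · rintro ⟨-, h2⟩; exact hyu h2
      · rintro ⟨-, h2⟩; subst h2; exact h.ne rfl

lemma swap_edgeSet (hpqne : p ≠ q) :
    (swap τ w u p q).edgeSet = (τ.edgeSet \ {s(w,u)}) ∪ {s(p,q)} := by
  rw [swap, SimpleGraph.edgeSet_sup, SimpleGraph.edgeSet_deleteEdges,
    SimpleGraph.edgeSet_fromEdgeSet]
  congr 1
  ext e
  simp only [Set.mem_diff, Set.mem_singleton_iff, Set.mem_setOf_eq]
  constructor
  · exact fun h => h.1
  · rintro rfl
    exact ⟨rfl, by simp [hpqne]⟩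

end Surgery

section Exchange

variable [Fintype V] [Fintype E]

lemma transfer_same {F : E → ℕ} {d z : E} (hzd : z ≠ d) :
    Transfer F d z z = F z + 1 := by simp [Transfer, hzd]

lemma transfer_at {F : E → ℕ} (d z : E) : Transfer F d z d = F d - 1 := by simp [Transfer]

lemma transfer_other {F : E → ℕ} {d z c : E} (hcd : c ≠ d) (hcz : c ≠ z) :
    Transfer F d z c = F c := by simp [Transfer, hcd, hcz]

lemma exch_aux :
    ∀ (n : ℕ) (τ σ : SimpleGraph (V ⊕ E)) (F H : E → ℕ),
      IsSpanningTree (BipGraph r) τ → IsSpanningTree (BipGraph r) σ →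
      Realizes τ F → Realizes σ H →
      (τ.edgeSet \ σ.edgeSet).ncard = n →
      ∀ d : E, H d < F d → ∃ x, F x < H x ∧ IsHypertree r (Transfer F d x) := by
  intro n
  induction n using Nat.strong_induction_on with
  | _ n IH =>
  intro τ σ F H hτ hσ hFr hHr hmeas d hd
  obtain ⟨hτle, hτc, hτac⟩ := hτ
  obtain ⟨hσle, hσc, hσac⟩ := hσ
  set w : V ⊕ E := Sum.inr d with hw
  -- choose u, a τ-neighbour of w that is not a σ-neighbour
  have hcard : (σ.neighborSet w).ncard < (τ.neighborSet w).ncard := by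
    rw [hFr d, hHr d]; omega
  have hnotsub : ¬ τ.neighborSet w ⊆ σ.neighborSet w := fun hsub =>
    absurd (Set.ncard_le_ncard hsub (σ.neighborSet w).toFinite) (by omega)
  obtain ⟨u, huτ, huσ⟩ := Set.not_subset.mp hnotsub
  have hadj : τ.Adj w u := huτ
  have hnotreach : ¬ (τ.deleteEdges {s(w,u)}).Reachable u w := by
    have hb := (SimpleGraph.isAcyclic_iff_forall_adj_isBridge.mp hτac) hadj
    rw [SimpleGraph.isBridge_iff] at hb
    exact fun h => hb h.symm
  -- find the crossing edge of σ
  obtain ⟨p, q, hσpq, hpC, hqC⟩ := walk_cross {x | (τ.deleteEdges {s(w,u)}).Reachable u x}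
      (hσc.preconnected u w).some (SimpleGraph.Reachable.refl _) hnotreach
  have hpq_ne : p ≠ q := swap_pq_ne hpC hqC
  have hτpq : ¬ τ.Adj p q := by
    intro hadjpq
    by_cases hs : s(p,q) = s(w,u)
    · rw [Sym2.eq_iff] at hs
      rcases hs with ⟨rfl, rfl⟩ | ⟨rfl, rfl⟩
      · exact hnotreach hpC
      · exact huσ hσpq.symm
    · exact hqC (hpC.trans (SimpleGraph.Adj.reachable (by
        rw [SimpleGraph.deleteEdges_adj]; exact ⟨hadjpq, by simpa using hs⟩)))
  have hGpq : (BipGraph r).Adj p q := hσle hσpq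
  have hspan' : IsSpanningTree (BipGraph r) (swap τ w u p q) :=
    swap_isSpanningTree hτc hτac hadj hτpq hpC hqC hτle hGpq
  -- the measure decreases
  have hwu_mem : s(w,u) ∈ τ.edgeSet \ σ.edgeSet := ⟨hadj, fun h => huσ h⟩
  have hmeas' : ((swap τ w u p q).edgeSet \ σ.edgeSet).ncard < n := by
    rw [swap_edgeSet hpq_ne]
    have hset : ((τ.edgeSet \ {s(w,u)}) ∪ {s(p,q)}) \ σ.edgeSet
        = (τ.edgeSet \ σ.edgeSet) \ {s(w,u)} := by
      have hb : s(p,q) ∈ σ.edgeSet := hσpq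
      ext e
      simp only [Set.mem_diff, Set.mem_union, Set.mem_singleton_iff]
      constructor
      · rintro ⟨h1 | rfl, h2⟩
        · exact ⟨⟨h1.1, h2⟩, h1.2⟩
        · exact absurd hb h2
      · rintro ⟨⟨h1, h2⟩, h3⟩
        exact ⟨Or.inl ⟨h1, h3⟩, h2⟩
    rw [hset, ← hmeas]
    exact Set.ncard_diff_singleton_lt_of_mem hwu_mem (τ.edgeSet \ σ.edgeSet).toFinite
  have hwu_ne : w ≠ u := hadj.ne
  have hFd1 : 1 ≤ F d := by omega
  have hw_notin_C : ¬ (τ.deleteEdges {s(w,u)}).Reachable u w := hnotreach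
  -- now case on the shape of the crossing edge
  obtain ⟨v0, hv0⟩ := nbr_inr_inl hτle hadj
  subst hv0
  -- common recursion step for the case where the new edge is at `inr z`, `z ≠ d`
  have key : ∀ z : E, z ≠ d → Realizes (swap τ w (Sum.inl v0) p q) (Transfer F d z) →
      ∃ x, F x < H x ∧ IsHypertree r (Transfer F d x) := by
    intro z hzd hreal'
    by_cases hFHz : F z < H z
    · exact ⟨z, hFHz, swap τ w (Sum.inl v0) p q, hspan', hreal'⟩
    · obtain ⟨x, hx, hxt⟩ := IH _ hmeas' (swap τ w (Sum.inl v0) p q) σ (Transfer F d z) H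
        hspan' ⟨hσle, hσc, hσac⟩ hreal' hHr rfl z (by rw [transfer_same hzd]; omega)
      have hxd : x ≠ d := by
        intro h; subst h; rw [transfer_at] at hx; omega
      have hxz : x ≠ z := by
        intro h; subst h; rw [transfer_same hzd] at hx; omega
      refine ⟨x, by rwa [transfer_other hxd hxz] at hx, ?_⟩
      have hTT : Transfer (Transfer F d z) z x = Transfer F d x := by
        funext c
        by_cases h1 : c = z
        · subst h1
          rw [transfer_at, transfer_same hzd, transfer_other hzd (fun h => hxz h.symm)]
          omega
        by_cases h2 : c = x
        · subst h2
          rw [transfer_same (fun h => h1 h), transfer_other hxd hxz, transfer_same hxd]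
        by_cases h3 : c = d
        · subst h3
          rw [transfer_other (fun h => h1 h) (fun h => h2 h), transfer_at, transfer_at]
        · rw [transfer_other (fun h => h1 h) (fun h => h2 h),
            transfer_other h3 h1, transfer_other h3 h2]
      rwa [hTT] at hxt
  rcases hGpq with ⟨v1, e1, hp1, hq1, -⟩ | ⟨v1, e1, hp1, hq1, -⟩
  · -- p = inl v1, q = inr e1
    subst hp1; subst hq1
    by_cases he1d : e1 = d
    · -- the added edge is again at `w`: recurse with the same degree sequence
      have hqw : Sum.inr e1 = w := by rw [he1d]
      rw [hqw] at hspan' hmeas' hτpq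
      have hwp : w ≠ Sum.inl v1 := by simp [hw]
      have hreal2 : Realizes (swap τ w (Sum.inl v0) (Sum.inl v1) w) F := by
        intro c
        by_cases hc : c = d
        · subst hc
          have hpnbr : Sum.inl v1 ∉ τ.neighborSet w \ {Sum.inl v0} := by
            intro hmem
            exact hτpq hmem.1.symm
          have hunbr : Sum.inl v0 ∈ τ.neighborSet w := huτ
          rw [show Sum.inr c = w from rfl, swap_nbr_w_eq_q hwp,
            Set.ncard_insert_of_notMem hpnbr ((τ.neighborSet w).diff _).toFinite,
            Set.ncard_diff_singleton_of_mem hunbr, hFr c]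
          omega
        · rw [swap_nbr_of_ne (by simp [hw, hc]) (by simp) (by simp) (by simp [hw, hc])]
          exact hFr c
      exact IH _ hmeas' _ σ F H hspan' ⟨hσle, hσc, hσac⟩ hreal2 hHr rfl d hd
    · -- new edge at `inr e1`, `e1 ≠ d`
      refine key e1 he1d ?_
      intro c
      by_cases hc : c = d
      · subst hc
        have hunbr : Sum.inl v0 ∈ τ.neighborSet w := huτ
        rw [swap_nbr_w (by simp [hw]) (by simp [hw, Ne.symm he1d]) hwu_ne,
          Set.ncard_diff_singleton_of_mem hunbr, hFr c,
          transfer_at]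
        omega
      by_cases hcz : c = e1
      · subst hcz
        have hpnbr : Sum.inl v1 ∉ τ.neighborSet (Sum.inr c) := fun h => hτpq h.symm
        rw [swap_nbr_q (by simp [hw, hc]) (by simp) (by simp),
          Set.ncard_insert_of_notMem hpnbr (τ.neighborSet _).toFinite, hFr c,
          transfer_same (by exact hc)]
      · rw [swap_nbr_of_ne (by simp [hw, hc]) (by simp) (by simp) (by simp [hcz]),
          hFr c, transfer_other hc hcz]
  · -- p = inr e1, q = inl v1
    subst hp1; subst hq1
    have he1d : e1 ≠ d := by
      intro h; subst h
      exact hnotreach hpC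
    refine key e1 he1d ?_
    intro c
    by_cases hc : c = d
    · subst hc
      have hunbr : Sum.inl v0 ∈ τ.neighborSet w := huτ
      rw [swap_nbr_w (by simp [hw, Ne.symm he1d]) (by simp [hw]) hwu_ne,
        Set.ncard_diff_singleton_of_mem hunbr, hFr c,
        transfer_at]
      omega
    by_cases hcz : c = e1
    · subst hcz
      have hqnbr : Sum.inl v1 ∉ τ.neighborSet (Sum.inr c) := fun h => hτpq h
      rw [swap_nbr_p (by simp [hw, hc]) (by simp) (by simp),
        Set.ncard_insert_of_notMem hqnbr (τ.neighborSet _).toFinite, hFr c,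
        transfer_same (by exact hc)]
    · rw [swap_nbr_of_ne (by simp [hw, hc]) (by simp) (by simp [hcz]) (by simp),
        hFr c, transfer_other hc hcz]

end Exchange

section Counting

variable [Fintype V] [Fintype E]

lemma exch {F H : E → ℕ} (hF : IsHypertree r F) (hH : IsHypertree r H) {d : E}
    (hd : H d < F d) : ∃ x, F x < H x ∧ IsHypertree r (Transfer F d x) := by
  obtain ⟨τ, hτ, hFr⟩ := hF
  obtain ⟨σ, hσ, hHr⟩ := hH
  exact exch_aux _ τ σ F H hτ hσ hFr hHr rfl d hd

/-- Double counting: the `E`-side degrees of a subgraph of `BipGraph r` sum to the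
number of edges. -/
lemma sum_degrees_eq_card_edges {τ : SimpleGraph (V ⊕ E)} (hle : τ ≤ BipGraph r)
    [DecidableRel τ.Adj] :
    ∑ c : E, τ.degree (Sum.inr c) = τ.edgeFinset.card := by
  classical
  have hdisj : ∀ c ∈ Finset.univ (α := E), ∀ c' ∈ Finset.univ (α := E), c ≠ c' →
      Disjoint (τ.incidenceFinset (Sum.inr c)) (τ.incidenceFinset (Sum.inr c')) := by
    intro c _ c' _ hne
    rw [Finset.disjoint_left]
    intro e he he'
    rw [SimpleGraph.mem_incidenceFinset] at he he'
    have h1 := (τ.incidenceSet_inter_incidenceSet_subset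
      (by simp [hne] : (Sum.inr c : V ⊕ E) ≠ Sum.inr c')) ⟨he, he'⟩
    rw [Set.mem_singleton_iff] at h1
    subst h1
    exact not_adj_inr_inr hle ((SimpleGraph.mem_edgeSet τ).mp he.1)
  have hcover : τ.edgeFinset = Finset.univ.biUnion
      (fun c : E => τ.incidenceFinset (Sum.inr c)) := by
    ext e
    simp only [Finset.mem_biUnion, Finset.mem_univ, true_and]
    induction e with
    | _ x y =>
      rw [SimpleGraph.mem_edgeFinset, SimpleGraph.mem_edgeSet]
      constructor
      · intro h
        rcases bip_shape hle h with ⟨v, e, hx, hy⟩ | ⟨v, e, hx, hy⟩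
        · subst hx; subst hy
          refine ⟨e, ?_⟩
          rw [SimpleGraph.mem_incidenceFinset]
          exact (SimpleGraph.mk'_mem_incidenceSet_right_iff τ).mpr h
        · subst hx; subst hy
          refine ⟨e, ?_⟩
          rw [SimpleGraph.mem_incidenceFinset]
          exact (SimpleGraph.mk'_mem_incidenceSet_left_iff τ).mpr h
      · rintro ⟨c, hc⟩
        rw [SimpleGraph.mem_incidenceFinset] at hc
        exact hc.1
  rw [hcover, Finset.card_biUnion hdisj]
  exact Finset.sum_congr rfl fun c _ => (τ.card_incidenceFinset_eq_degree _).symm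

lemma realizes_sum {τ : SimpleGraph (V ⊕ E)} {F : E → ℕ}
    (hτ : IsSpanningTree (BipGraph r) τ) (hF : Realizes τ F) :
    (∑ c : E, F c) + 1 = Fintype.card V := by
  classical
  obtain ⟨hle, hc, hac⟩ := hτ
  have htree : τ.IsTree := ⟨hc, hac⟩
  have hcard := htree.card_edgeFinset
  have hdeg : ∀ c : E, τ.degree (Sum.inr c) = F c + 1 := by
    intro c
    rw [← hF c]
    rw [Set.ncard_eq_toFinset_card' _, ← SimpleGraph.neighborFinset_def]
    rfl
  have hsum := sum_degrees_eq_card_edges (r := r) hle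
  rw [Finset.sum_congr rfl (fun c _ => hdeg c), Finset.sum_add_distrib,
    Finset.sum_const, smul_eq_mul, mul_one] at hsum
  have hVE : Fintype.card (V ⊕ E) = Fintype.card V + Fintype.card E := Fintype.card_sum
  rw [Finset.card_univ] at hsum
  omega

lemma sum_hypertree {F : E → ℕ} (hF : IsHypertree r F) :
    (∑ c : E, F c) + 1 = Fintype.card V := by
  obtain ⟨τ, hτ, hFr⟩ := hF
  exact realizes_sum hτ hFr

/-- If a transfer of `F` is again a hypertree, the source value was positive. -/
lemma pos_of_transfer {F : E → ℕ} (hF : IsHypertree r F) {d d' : E} (hne : d' ≠ d)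
    (hT : IsHypertree r (Transfer F d d')) : 1 ≤ F d := by
  classical
  by_contra hFd
  have hFd0 : F d = 0 := by omega
  have h1 := sum_hypertree hF
  have h2 := sum_hypertree hT
  have hsum : ∑ c : E, Transfer F d d' c = (∑ c : E, F c) + 1 := by
    have hsplit : ∀ c : E, Transfer F d d' c = F c + (if c = d' then 1 else 0) := by
      intro c
      by_cases h1 : c = d
      · subst h1; rw [transfer_at, if_neg (fun h => hne h.symm)]; omega
      by_cases h2 : c = d'
      · subst h2; rw [transfer_same hne, if_pos rfl]
      · rw [transfer_other h1 h2, if_neg h2, Nat.add_zero]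
    rw [Finset.sum_congr rfl (fun c _ => hsplit c), Finset.sum_add_distrib,
      Finset.sum_ite_eq' Finset.univ d' (fun _ => 1), if_pos (Finset.mem_univ _)]
  omega

lemma hypertree_lt_cardV {F : E → ℕ} (hF : IsHypertree r F) (c : E) :
    F c < Fintype.card V := by
  have h1 := sum_hypertree hF
  have h2 : F c ≤ ∑ c : E, F c :=
    Finset.single_le_sum (fun x _ => Nat.zero_le _) (Finset.mem_univ c)
  omega

end Counting

section MainArg

variable [Fintype V] [Fintype E] [LinearOrder E]

/-- The set of internally inactive hyperedges of `f`. -/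
def Inact (r : V → E → Prop) (f : E → ℕ) : Set E :=
  {e | ∃ e', e' < e ∧ IsHypertree r (Transfer f e e')}

lemma intInact_eq (f : E → ℕ) : intInact r f = (Inact r f).ncard :=
  Nat.card_coe_set_eq _

lemma stay_inactive {f : E → ℕ} (hf : IsHypertree r f) {e e' : E} (he' : e' < e)
    (hg : IsHypertree r (Transfer f e e')) {d : E} (hd : d ∈ Inact r f) (hed : e < d) :
    d ∈ Inact r (Transfer f e e') := by
  obtain ⟨d', hd', h1⟩ := hd
  have hfd1 : 1 ≤ f d := pos_of_transfer hf (ne_of_lt hd') h1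
  have hde : d ≠ e := ne_of_gt hed
  have hde' : d ≠ e' := ne_of_gt (lt_trans he' hed)
  have hdd' : d ≠ d' := ne_of_gt hd'
  have hlt : Transfer f d d' d < Transfer f e e' d := by
    rw [transfer_at, transfer_other hde hde']
    omega
  obtain ⟨x, hx, hxt⟩ := exch hg h1 hlt
  have hxlt : x < d := by
    by_cases h1x : x = e
    · subst h1x; exact hed
    by_cases h2x : x = e'
    · subst h2x; exact lt_trans he' hed
    by_cases h3x : x = d'
    · subst h3x; exact hd'
    by_cases h4x : x = d
    · subst h4x
      rw [transfer_at, transfer_other hde hde'] at hx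
      omega
    · rw [transfer_other h1x h2x, transfer_other h4x h3x] at hx
      omega
  exact ⟨x, hxlt, hxt⟩

/-- rank of a hyperedge in the order -/
def idx (e : E) : ℕ := (Finset.univ.filter (· < e)).card

lemma idx_lt {e' e : E} (h : e' < e) : idx e' < idx e := by
  apply Finset.card_lt_card
  rw [Finset.ssubset_iff_of_subset]
  · exact ⟨e', by simp [h], by simp⟩
  · intro x hx
    simp only [Finset.mem_filter, Finset.mem_univ, true_and] at hx ⊢
    exact lt_trans hx h

lemma idx_le_card (e : E) : idx e ≤ Fintype.card E := by
  rw [← Finset.card_univ]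
  exact Finset.card_filter_le _ _

/-- weight of a hyperedge; small hyperedges are heavy -/
def wt (V : Type*) [Fintype V] [Fintype E] (e : E) : ℕ :=
  (Fintype.card V + 2) ^ (Fintype.card E - idx e)

lemma wt_lt {e' e : E} (h : e' < e) : wt V e < wt V e' := by
  have h1 := idx_lt h
  have h2 := idx_le_card e
  exact Nat.pow_lt_pow_right (by omega) (by omega)

/-- weighted measure, increasing along transfers towards smaller hyperedges -/
def Mw (V : Type*) [Fintype V] [Fintype E] (f : E → ℕ) : ℕ := ∑ c : E, f c * wt V c

def Bd (V E : Type*) [Fintype V] [Fintype E] : ℕ :=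
  Fintype.card E * (Fintype.card V + 2) ^ (Fintype.card E + 1) + 1

lemma M_transfer_lt {f : E → ℕ} {e e' : E} (h : e' < e) (hf1 : 1 ≤ f e) :
    Mw V f < Mw V (Transfer f e e') := by
  classical
  have hne : e ≠ e' := ne_of_gt h
  have hkey : ∀ c : E, Transfer f e e' c * wt V c + (if c = e then wt V e else 0)
      = f c * wt V c + (if c = e' then wt V e' else 0) := by
    intro c
    by_cases h1 : c = e
    · subst h1
      rw [transfer_at, if_pos rfl, if_neg hne]
      have : (f c - 1) * wt V c + wt V c = f c * wt V c := by
        cases' Nat.exists_eq_add_of_le hf1 with k hk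
        rw [hk, Nat.add_sub_cancel_left]
        ring
      omega
    by_cases h2 : c = e'
    · subst h2
      rw [transfer_same (fun hh => hne hh.symm), if_neg h1, if_pos rfl]
      ring
    · rw [transfer_other h1 h2, if_neg h1, if_neg h2]
  have hsum : Mw V (Transfer f e e') + wt V e = Mw V f + wt V e' := by
    have := Finset.sum_congr rfl (fun c (_ : c ∈ Finset.univ) => hkey c)
    rw [Finset.sum_add_distrib, Finset.sum_add_distrib,
      Finset.sum_ite_eq' Finset.univ e (fun _ => wt V e),
      Finset.sum_ite_eq' Finset.univ e' (fun _ => wt V e'),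
      if_pos (Finset.mem_univ _), if_pos (Finset.mem_univ _)] at this
    exact this
  have hw := wt_lt (V := V) h
  omega

lemma M_lt_Bd {f : E → ℕ} (hf : IsHypertree r f) : Mw V f < Bd V E := by
  have hterm : ∀ c : E, f c * wt V c ≤ (Fintype.card V + 2) ^ (Fintype.card E + 1) := by
    intro c
    have h1 : f c < Fintype.card V := hypertree_lt_cardV hf c
    have h2 : wt V c ≤ (Fintype.card V + 2) ^ (Fintype.card E) :=
      Nat.pow_le_pow_right (by omega) (by omega)
    calc f c * wt V c ≤ (Fintype.card V + 2) * (Fintype.card V + 2) ^ (Fintype.card E) :=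
          Nat.mul_le_mul (by omega) h2
      _ = (Fintype.card V + 2) ^ (Fintype.card E + 1) := by ring
  have := Finset.sum_le_sum (fun c (_ : c ∈ Finset.univ) => hterm c)
  rw [Finset.sum_const, Finset.card_univ, smul_eq_mul] at this
  have : Mw V f ≤ Fintype.card E * (Fintype.card V + 2) ^ (Fintype.card E + 1) := this
  rw [Bd]
  omega

lemma down : ∀ (m : ℕ) (f : E → ℕ), IsHypertree r f → Bd V E - Mw V f ≤ m →
    ∀ j, j ≤ (Inact r f).ncard → ∃ g, IsHypertree r g ∧ (Inact r g).ncard = j := by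
  intro m
  induction m using Nat.strong_induction_on with
  | _ m IH =>
  intro f hf hm j hj
  rcases eq_or_lt_of_le hj with heq | hlt
  · exact ⟨f, hf, heq.symm⟩
  have hne : (Inact r f).Nonempty := by
    rcases Set.eq_empty_or_nonempty (Inact r f) with h | h
    · rw [h, Set.ncard_empty] at hlt; omega
    · exact h
  have hfin : (Inact r f).Finite := Set.toFinite _
  obtain ⟨e, heI, hemin⟩ := Set.exists_min_image (Inact r f) id hfin hne
  obtain ⟨e', he', hgt⟩ := heI
  have heI' : e ∈ Inact r f := ⟨e', he', hgt⟩
  have hfe1 : 1 ≤ f e := pos_of_transfer hf (ne_of_lt he') hgt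
  have hMlt : Mw V f < Mw V (Transfer f e e') := M_transfer_lt he' hfe1
  have hMb : Mw V (Transfer f e e') < Bd V E := M_lt_Bd hgt
  have hMf : Mw V f < Bd V E := M_lt_Bd hf
  have hsub : Inact r f \ {e} ⊆ Inact r (Transfer f e e') := by
    intro d hdmem
    obtain ⟨hdI, hdne⟩ := hdmem
    have hed : e < d := lt_of_le_of_ne (hemin d hdI)
      (fun hh => hdne (by simp [← hh]))
    exact stay_inactive hf he' hgt hdI hed
  have hcard : j ≤ (Inact r (Transfer f e e')).ncard := by
    have h1 : (Inact r f \ {e}).ncard = (Inact r f).ncard - 1 :=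
      Set.ncard_diff_singleton_of_mem heI'
    have h2 : (Inact r f \ {e}).ncard ≤ (Inact r (Transfer f e e')).ncard :=
      Set.ncard_le_ncard hsub (Set.toFinite _)
    omega
  exact IH (Bd V E - Mw V (Transfer f e e')) (by omega) (Transfer f e e') hgt (le_refl _) j hcard

end MainArg

end IntInactAux


/-- if there is a hypertree with internal inactivity `k ≥ 1`, then there is one
with internal inactivity `k - 1`. -/
theorem exists_intInact_pred {V E : Type*} [Fintype V] [Fintype E] [LinearOrder E]
    (r : V → E → Prop) (hconn : (BipGraph r).Connected) (k : ℕ) (hk : 1 ≤ k)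
    (h : ∃ f : E → ℕ, IsHypertree r f ∧ intInact r f = k) :
    ∃ g : E → ℕ, IsHypertree r g ∧ intInact r g = k - 1 := by
  obtain ⟨f, hf, hk⟩ := h
  rw [IntInactAux.intInact_eq] at hk
  obtain ⟨g, hg, hgc⟩ := IntInactAux.down (IntInactAux.Bd V E - IntInactAux.Mw V f) f hf
    (le_refl _) (k - 1) (by omega)
  exact ⟨g, hg, by rw [IntInactAux.intInact_eq, hgc]⟩
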